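/- arXiv:1809.03814 — 2 statements merged into one kernel-verified Lean document; each statement's English description precedes it below -/
import Mathlib

section
/- Any decoding system T (a set of DPO rewrite rules, one for each triple (α,σ₁,σ₂) of an encoding edge label and two node-vertex labels, whose left-hand side is a single α-labelled edge between a σ₁-node and a σ₂-node and whose right-hand side is a string graph on the same two node-vertices containing at least one additional vertex and no inputs, outputs or encoding edges) is confluent and terminating as a rewrite system on encoded string graphs. -/
/-- Vertex labels: node-vertex labels, wire-vertex labels, and nonterminal labels. -/
inductive VLab : Type
  | node : ℕ → VLab
  | wire : ℕ → VLab
  | nt : ℕ → VLab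
  deriving DecidableEq

/-- Edge labels: plain (terminal) labels and encoding labels. -/
inductive ELab : Type
  | plain : ℕ → ELab
  | enc : ℕ → ELab
  deriving DecidableEq

def VLab.isNode : VLab → Bool | .node _ => true | _ => false
def VLab.isWire : VLab → Bool | .wire _ => true | _ => false
def VLab.isNT : VLab → Bool | .nt _ => true | _ => false
def ELab.isEnc : ELab → Bool | .enc _ => true | _ => false

/-- A finite labelled directed graph with vertices drawn from ℕ. -/
structure LabGraph : Type where
  V : Finset ℕ
  E : Finset (ℕ × ELab × ℕ)
  lab : ℕ → VLab

def inDeg (H : LabGraph) (v : ℕ) : ℕ := (H.E.filter (fun e => e.2.2 = v)).card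
def outDeg (H : LabGraph) (v : ℕ) : ℕ := (H.E.filter (fun e => e.1 = v)).card

/-- Edges connect distinct vertices of the graph (no self-loops). -/
def WellFormed (H : LabGraph) : Prop := ∀ e ∈ H.E, e.1 ∈ H.V ∧ e.2.2 ∈ H.V ∧ e.1 ≠ e.2.2

/-- A string graph: wire-vertices have in/out-degree at most one, no encoding
edges, and node-vertices are adjacent only to wire-vertices. -/
def StringGraph (H : LabGraph) : Prop :=
  WellFormed H ∧
  (∀ v ∈ H.V, (H.lab v).isNode = true ∨ (H.lab v).isWire = true) ∧
  (∀ v ∈ H.V, (H.lab v).isWire = true → inDeg H v ≤ 1 ∧ outDeg H v ≤ 1) ∧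
  (∀ e ∈ H.E, e.2.1.isEnc = false) ∧
  (∀ e ∈ H.E, ¬((H.lab e.1).isNode = true ∧ (H.lab e.2.2).isNode = true))

/-- An encoded string graph: like a string graph but encoding-labelled edges
between node-vertices are allowed. -/
def EncodedSG (H : LabGraph) : Prop :=
  WellFormed H ∧
  (∀ v ∈ H.V, (H.lab v).isNode = true ∨ (H.lab v).isWire = true) ∧
  (∀ v ∈ H.V, (H.lab v).isWire = true → inDeg H v ≤ 1 ∧ outDeg H v ≤ 1) ∧
  (∀ e ∈ H.E, if e.2.1.isEnc = true
    then (H.lab e.1).isNode = true ∧ (H.lab e.2.2).isNode = true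
    else ¬((H.lab e.1).isNode = true ∧ (H.lab e.2.2).isNode = true))

/-- Number of encoding edges. -/
def encCount (H : LabGraph) : ℕ := (H.E.filter (fun e => e.2.1.isEnc = true)).card

def isInput (H : LabGraph) (v : ℕ) : Prop := (H.lab v).isWire = true ∧ inDeg H v = 0
def isOutput (H : LabGraph) (v : ℕ) : Prop := (H.lab v).isWire = true ∧ outDeg H v = 0

/-- A decoding rule: a replacement fragment with two distinguished node-vertices. -/
structure DecRule : Type where
  F : LabGraph
  src : ℕ
  tgt : ℕ

/-- A decoding system: one rule for every triple (encoding label, node label, node label). -/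
structure DecSystem : Type where
  rule : ℕ → ℕ → ℕ → DecRule

/-- The rule for (α,σ₁,σ₂) has as RHS a string graph on the two node-vertices with at
least one additional vertex and no inputs, outputs or encoding edges. -/
def ValidDecRule (R : DecRule) (s1 s2 : ℕ) : Prop :=
  R.src ∈ R.F.V ∧ R.tgt ∈ R.F.V ∧ R.src ≠ R.tgt ∧
  R.F.lab R.src = VLab.node s1 ∧ R.F.lab R.tgt = VLab.node s2 ∧
  StringGraph R.F ∧ 3 ≤ R.F.V.card ∧
  (∀ v ∈ R.F.V, (R.F.lab v).isNode = true → v = R.src ∨ v = R.tgt) ∧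
  (∀ v ∈ R.F.V, (R.F.lab v).isWire = true → inDeg R.F v = 1 ∧ outDeg R.F v = 1)

def ValidDecSystem (T : DecSystem) : Prop := ∀ a s1 s2, ValidDecRule (T.rule a s1 s2) s1 s2

/-- One DPO decoding step: remove one encoding edge and glue in a fresh copy of the
corresponding rule's right-hand side on its two endpoints. -/
def DecStep (T : DecSystem) (H H' : LabGraph) : Prop :=
  ∃ u a w s1 s2, (u, ELab.enc a, w) ∈ H.E ∧
    H.lab u = VLab.node s1 ∧ H.lab w = VLab.node s2 ∧
    ∃ ρ : ℕ → ℕ,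
      Set.InjOn ρ ↑(T.rule a s1 s2).F.V ∧
      ρ (T.rule a s1 s2).src = u ∧ ρ (T.rule a s1 s2).tgt = w ∧
      (∀ x ∈ (T.rule a s1 s2).F.V, x ≠ (T.rule a s1 s2).src → x ≠ (T.rule a s1 s2).tgt →
        ρ x ∉ H.V) ∧
      H'.V = H.V ∪ (T.rule a s1 s2).F.V.image ρ ∧
      H'.E = (H.E.erase (u, ELab.enc a, w)) ∪
        (T.rule a s1 s2).F.E.image (fun e => (ρ e.1, e.2.1, ρ e.2.2)) ∧
      (∀ v ∈ H.V, H'.lab v = H.lab v) ∧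
      (∀ x ∈ (T.rule a s1 s2).F.V, H'.lab (ρ x) = (T.rule a s1 s2).F.lab x)

/-- Full decoding: exhaustive application of the decoding system. -/
def FullDecode (T : DecSystem) (H H' : LabGraph) : Prop :=
  Relation.ReflTransGen (DecStep T) H H' ∧ encCount H' = 0

/-- LabGraph isomorphism. -/
def GIso (H K : LabGraph) : Prop :=
  ∃ f : ℕ → ℕ, Set.BijOn f ↑H.V ↑K.V ∧
    (∀ v ∈ H.V, K.lab (f v) = H.lab v) ∧
    (∀ u l w, u ∈ H.V → w ∈ H.V → ((u, l, w) ∈ H.E ↔ (f u, l, f w) ∈ K.E))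

open Classical in
/-- Detailed description of a decoding step. -/
def StepOn (T : DecSystem) (u a w s1 s2 : ℕ) (ρ : ℕ → ℕ) (H H' : LabGraph) : Prop :=
  (u, ELab.enc a, w) ∈ H.E ∧
  H.lab u = VLab.node s1 ∧ H.lab w = VLab.node s2 ∧
  Set.InjOn ρ ↑(T.rule a s1 s2).F.V ∧
  ρ (T.rule a s1 s2).src = u ∧ ρ (T.rule a s1 s2).tgt = w ∧
  (∀ x ∈ (T.rule a s1 s2).F.V, x ≠ (T.rule a s1 s2).src → x ≠ (T.rule a s1 s2).tgt →
    ρ x ∉ H.V) ∧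
  H'.V = H.V ∪ (T.rule a s1 s2).F.V.image ρ ∧
  H'.E = (H.E.erase (u, ELab.enc a, w)) ∪
    (T.rule a s1 s2).F.E.image (fun e => (ρ e.1, e.2.1, ρ e.2.2)) ∧
  (∀ v ∈ H.V, H'.lab v = H.lab v) ∧
  (∀ x ∈ (T.rule a s1 s2).F.V, H'.lab (ρ x) = (T.rule a s1 s2).F.lab x)

theorem decStep_iff {T : DecSystem} {H H' : LabGraph} :
    DecStep T H H' ↔ ∃ u a w s1 s2 ρ, StepOn T u a w s1 s2 ρ H H' := by
  constructor
  · rintro ⟨u, a, w, s1, s2, h1, h2, h3, ρ, hs⟩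
    exact ⟨u, a, w, s1, s2, ρ, h1, h2, h3, hs⟩
  · rintro ⟨u, a, w, s1, s2, ρ, h1, h2, h3, hs⟩
    exact ⟨u, a, w, s1, s2, h1, h2, h3, ρ, hs⟩

theorem isNode_iff {v : VLab} : v.isNode = true ↔ ∃ s, v = .node s := by
  cases v <;> simp [VLab.isNode]

theorem isWire_iff {v : VLab} : v.isWire = true ↔ ∃ s, v = .wire s := by
  cases v <;> simp [VLab.isWire]

theorem isEnc_iff {l : ELab} : l.isEnc = true ↔ ∃ a, l = .enc a := by
  cases l <;> simp [ELab.isEnc]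

theorem frag_nonenc {T : DecSystem} (hT : ValidDecSystem T) (a s1 s2 : ℕ) :
    ∀ e ∈ (T.rule a s1 s2).F.E, e.2.1.isEnc = false :=
  (hT a s1 s2).2.2.2.2.2.1.2.2.2.1

theorem stepOn_encCount {T : DecSystem} (hT : ValidDecSystem T)
    {u a w s1 s2 : ℕ} {ρ : ℕ → ℕ} {H H' : LabGraph}
    (h : StepOn T u a w s1 s2 ρ H H') : encCount H' + 1 = encCount H := by
  obtain ⟨he, -, -, -, -, -, -, -, hE, -, -⟩ := h
  have himg : ((T.rule a s1 s2).F.E.image (fun e => (ρ e.1, e.2.1, ρ e.2.2))).filter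
      (fun e => e.2.1.isEnc = true) = ∅ := by
    apply Finset.filter_false_of_mem
    intro e he'
    simp only [Finset.mem_image] at he'
    obtain ⟨e', he', rfl⟩ := he'
    simpa using frag_nonenc hT a s1 s2 e' he'
  have hmem : (u, ELab.enc a, w) ∈ H.E.filter (fun e => e.2.1.isEnc = true) := by
    exact Finset.mem_filter.mpr ⟨he, rfl⟩
  unfold encCount
  rw [hE, Finset.filter_union, himg, Finset.union_empty, Finset.filter_erase,
    Finset.card_erase_of_mem hmem]
  have := Finset.card_pos.mpr ⟨_, hmem⟩
  omega

theorem no_inf_aux {T : DecSystem} (hT : ValidDecSystem T) :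
    ∀ H : LabGraph, ¬∃ f : ℕ → LabGraph, f 0 = H ∧ ∀ n, DecStep T (f n) (f (n + 1)) := by
  intro H
  rintro ⟨f, -, hstep⟩
  have hdec : ∀ n, encCount (f (n + 1)) + 1 = encCount (f n) := by
    intro n
    obtain ⟨u, a, w, s1, s2, ρ, hs⟩ := decStep_iff.mp (hstep n)
    exact stepOn_encCount hT hs
  have key : ∀ n, encCount (f n) + n ≤ encCount (f 0) := by
    intro n
    induction n with
    | zero => simp
    | succ k ih => have := hdec k; omega
  have := key (encCount (f 0) + 1)
  omega

theorem giso_refl (H : LabGraph) : GIso H H :=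
  ⟨id, Set.bijOn_id _, fun _ _ => rfl, fun _ _ _ _ _ => Iff.rfl⟩

theorem giso_symm {H K : LabGraph} (h : GIso H K) : GIso K H := by
  obtain ⟨f, hbij, hlab, hedge⟩ := h
  refine ⟨Function.invFunOn f ↑H.V, ⟨hbij.surjOn.mapsTo_invFunOn, ?_, ?_⟩, ?_, ?_⟩
  · intro p hp q hq hpq
    have := hbij.invOn_invFunOn.2 hp
    have := hbij.invOn_invFunOn.2 hq
    rw [← hbij.invOn_invFunOn.2 hp, ← hbij.invOn_invFunOn.2 hq, hpq]
  · intro v hv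
    exact ⟨f v, hbij.mapsTo hv, hbij.invOn_invFunOn.1 hv⟩
  · intro k hk
    have h1 : Function.invFunOn f ↑H.V k ∈ ↑H.V := hbij.surjOn.mapsTo_invFunOn hk
    have h2 := hbij.invOn_invFunOn.2 hk
    rw [← hlab _ h1, h2]
  · intro p l q hp hq
    have h1 : Function.invFunOn f ↑H.V p ∈ ↑H.V := hbij.surjOn.mapsTo_invFunOn hp
    have h2 : Function.invFunOn f ↑H.V q ∈ ↑H.V := hbij.surjOn.mapsTo_invFunOn hq
    have h3 := (hedge _ l _ h1 h2).symm
    rwa [hbij.invOn_invFunOn.2 hp, hbij.invOn_invFunOn.2 hq] at h3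

theorem giso_trans {H K L : LabGraph} (h1 : GIso H K) (h2 : GIso K L) : GIso H L := by
  obtain ⟨f, hf, hflab, hfedge⟩ := h1
  obtain ⟨g, hg, hglab, hgedge⟩ := h2
  refine ⟨g ∘ f, hg.comp hf, ?_, ?_⟩
  · intro v hv
    simp only [Function.comp_apply]
    rw [hglab _ (hf.mapsTo hv), hflab _ hv]
  · intro p l q hp hq
    simp only [Function.comp_apply]
    rw [hfedge p l q hp hq, hgedge _ l _ (hf.mapsTo hp) (hf.mapsTo hq)]

theorem giso_encCount {H K : LabGraph} (hH : WellFormed H) (hK : WellFormed K)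
    (h : GIso H K) : encCount H = encCount K := by
  obtain ⟨f, hbij, hlab, hedge⟩ := h
  unfold encCount
  apply Finset.card_bij (fun e _ => (f e.1, e.2.1, f e.2.2))
  · intro e he
    simp only [Finset.mem_filter] at he ⊢
    obtain ⟨hp, hq, -⟩ := hH e he.1
    exact ⟨((hedge _ _ _ hp hq).mp he.1 : _), he.2⟩
  · intro e he e' he' heq
    simp only [Finset.mem_filter] at he he'
    obtain ⟨hp, hq, -⟩ := hH e he.1
    obtain ⟨hp', hq', -⟩ := hH e' he'.1
    obtain ⟨h1, h2, h3⟩ : f e.1 = f e'.1 ∧ e.2.1 = e'.2.1 ∧ f e.2.2 = f e'.2.2 := by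
      rw [Prod.ext_iff, Prod.ext_iff] at heq; exact ⟨heq.1, heq.2.1, heq.2.2⟩
    have := hbij.injOn hp hp' h1
    have := hbij.injOn hq hq' h3
    exact Prod.ext ‹e.1 = e'.1› (Prod.ext h2 ‹e.2.2 = e'.2.2›)
  · intro e he
    simp only [Finset.mem_filter] at he
    obtain ⟨hp, hq, -⟩ := hK e he.1
    obtain ⟨p, hpV, hfp⟩ := hbij.surjOn hp
    obtain ⟨q, hqV, hfq⟩ := hbij.surjOn hq
    refine ⟨(p, e.2.1, q), ?_, ?_⟩
    · simp only [Finset.mem_filter]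
      refine ⟨(hedge p e.2.1 q hpV hqV).mpr ?_, he.2⟩
      rw [hfp, hfq]; exact he.1
    · simp [hfp, hfq]

theorem stepOn_preserves {T : DecSystem} (hT : ValidDecSystem T)
    {u a w s1 s2 : ℕ} {ρ : ℕ → ℕ} {H H' : LabGraph}
    (h : StepOn T u a w s1 s2 ρ H H') (hH : EncodedSG H) : EncodedSG H' := by
  obtain ⟨he, hu, hw, hinj, hρs, hρt, hfresh, hV, hE, hlabold, hlabnew⟩ := h
  obtain ⟨hWF, hnw, hwd, hencc⟩ := hH
  set R := T.rule a s1 s2 with hR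
  obtain ⟨hsrcV, htgtV, hst, hlabsrc, hlabtgt, ⟨hWF_F, hFnw, hFwd, hFnonenc, hFnn⟩,
    hcard, hFnodes, hFwires⟩ := hT a s1 s2
  have huV : u ∈ H.V := (hWF _ he).1
  have hwV : w ∈ H.V := (hWF _ he).2.1
  have huw : u ≠ w := (hWF _ he).2.2
  -- key1 : images landing in H.V come from src or tgt
  have key1 : ∀ x ∈ R.F.V, ρ x ∈ H.V → x = R.src ∨ x = R.tgt := by
    intro x hx hρx
    by_contra hc
    push_neg at hc
    exact hfresh x hx hc.1 hc.2 hρx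
  -- decomposition of vertices
  have key2 : ∀ v ∈ H'.V, v ∈ H.V ∨
      ∃ x ∈ R.F.V, x ≠ R.src ∧ x ≠ R.tgt ∧ v = ρ x := by
    intro v hv
    rw [hV, Finset.mem_union] at hv
    rcases hv with hv | hv
    · exact Or.inl hv
    · rw [Finset.mem_image] at hv
      obtain ⟨x, hx, rfl⟩ := hv
      by_cases hxs : x = R.src
      · subst hxs; rw [hρs]; exact Or.inl huV
      by_cases hxt : x = R.tgt
      · subst hxt; rw [hρt]; exact Or.inl hwV
      · exact Or.inr ⟨x, hx, hxs, hxt, rfl⟩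
  -- decomposition of edges
  have key3 : ∀ e' ∈ H'.E, (e' ∈ H.E ∧ e' ≠ (u, ELab.enc a, w)) ∨
      ∃ d ∈ R.F.E, e' = (ρ d.1, d.2.1, ρ d.2.2) := by
    intro e' he'
    rw [hE, Finset.mem_union] at he'
    rcases he' with he' | he'
    · rw [Finset.mem_erase] at he'
      exact Or.inl ⟨he'.2, he'.1⟩
    · rw [Finset.mem_image] at he'
      obtain ⟨d, hd, rfl⟩ := he'
      exact Or.inr ⟨d, hd, rfl⟩
  have hsubV : H.V ⊆ H'.V := by rw [hV]; exact Finset.subset_union_left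
  have hWF' : WellFormed H' := by
    intro e' he'
    rcases key3 e' he' with ⟨heH, -⟩ | ⟨d, hd, rfl⟩
    · obtain ⟨h1, h2, h3⟩ := hWF _ heH
      exact ⟨hsubV h1, hsubV h2, h3⟩
    · obtain ⟨h1, h2, h3⟩ := hWF_F _ hd
      refine ⟨?_, ?_, ?_⟩
      · rw [hV]; exact Finset.mem_union_right _ (Finset.mem_image_of_mem _ h1)
      · rw [hV]; exact Finset.mem_union_right _ (Finset.mem_image_of_mem _ h2)
      · intro hcon
        exact h3 (hinj h1 h2 hcon)
  refine ⟨hWF', ?_, ?_, ?_⟩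
  · -- node or wire
    intro v hv
    rcases key2 v hv with hvH | ⟨x, hx, -, -, rfl⟩
    · rw [hlabold v hvH]; exact hnw v hvH
    · rw [hlabnew x hx]; exact hFnw x hx
  · -- wire degrees
    intro v hv hwire
    rcases key2 v hv with hvH | ⟨x, hx, hxs, hxt, rfl⟩
    · -- old vertex
      rw [hlabold v hvH] at hwire
      have hnotu : v ≠ u := by
        intro hvu; rw [hvu, hu] at hwire; simp [VLab.isWire] at hwire
      have hnotw : v ≠ w := by
        intro hvw; rw [hvw, hw] at hwire; simp [VLab.isWire] at hwire
      have hnotnew : ∀ d ∈ R.F.E, ρ d.1 ≠ v ∧ ρ d.2.2 ≠ v := by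
        intro d hd
        obtain ⟨h1, h2, -⟩ := hWF_F _ hd
        constructor
        · intro hcon
          rcases key1 _ h1 (hcon ▸ hvH) with hc | hc
          · rw [hc, hρs] at hcon; exact hnotu hcon.symm
          · rw [hc, hρt] at hcon; exact hnotw hcon.symm
        · intro hcon
          rcases key1 _ h2 (hcon ▸ hvH) with hc | hc
          · rw [hc, hρs] at hcon; exact hnotu hcon.symm
          · rw [hc, hρt] at hcon; exact hnotw hcon.symm
      constructor
      · refine le_trans (Finset.card_le_card ?_) ((hwd v hvH hwire).1)
        intro e' he'
        rw [Finset.mem_filter] at he' ⊢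
        obtain ⟨he', hv'⟩ := he'
        rcases key3 e' he' with ⟨heH, -⟩ | ⟨d, hd, rfl⟩
        · exact ⟨heH, hv'⟩
        · exact absurd hv' (hnotnew d hd).2
      · refine le_trans (Finset.card_le_card ?_) ((hwd v hvH hwire).2)
        intro e' he'
        rw [Finset.mem_filter] at he' ⊢
        obtain ⟨he', hv'⟩ := he'
        rcases key3 e' he' with ⟨heH, -⟩ | ⟨d, hd, rfl⟩
        · exact ⟨heH, hv'⟩
        · exact absurd hv' (hnotnew d hd).1
    · -- new vertex ρ x, interior
      rw [hlabnew x hx] at hwire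
      have hρxnotH : ρ x ∉ H.V := hfresh x hx hxs hxt
      have hginj : Set.InjOn (fun d : ℕ × ELab × ℕ => (ρ d.1, d.2.1, ρ d.2.2)) ↑R.F.E := by
        intro d hd d' hd' hdd
        simp only [Finset.mem_coe] at hd hd'
        obtain ⟨h1, h2, -⟩ := hWF_F _ hd
        obtain ⟨h1', h2', -⟩ := hWF_F _ hd'
        simp only [Prod.mk.injEq] at hdd
        exact Prod.ext (hinj h1 h1' hdd.1) (Prod.ext hdd.2.1 (hinj h2 h2' hdd.2.2))
      constructor
      · have : H'.E.filter (fun e => e.2.2 = ρ x) =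
            (R.F.E.filter (fun d => d.2.2 = x)).image (fun d => (ρ d.1, d.2.1, ρ d.2.2)) := by
          rw [hE, Finset.filter_union]
          have h0 : (H.E.erase (u, ELab.enc a, w)).filter (fun e => e.2.2 = ρ x) = ∅ := by
            apply Finset.filter_false_of_mem
            intro e' he' hcon
            have := (hWF _ (Finset.mem_of_mem_erase he')).2.1
            rw [hcon] at this
            exact hρxnotH this
          rw [h0, Finset.empty_union, Finset.filter_image]
          congr 1
          apply Finset.filter_congr
          intro d hd
          obtain ⟨-, h2, -⟩ := hWF_F _ hd
          simp only [Function.comp]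
          constructor
          · intro hcon; exact hinj h2 hx hcon
          · intro hcon; rw [hcon]
        rw [inDeg, this, Finset.card_image_of_injOn (hginj.mono (fun d hd => by simp only [Finset.coe_filter, Set.mem_setOf_eq] at hd; exact hd.1))]
        have h5 := (hFwires x hx hwire).1
        rw [inDeg] at h5
        rw [← hR] at h5
        omega
      · have : H'.E.filter (fun e => e.1 = ρ x) =
            (R.F.E.filter (fun d => d.1 = x)).image (fun d => (ρ d.1, d.2.1, ρ d.2.2)) := by
          rw [hE, Finset.filter_union]
          have h0 : (H.E.erase (u, ELab.enc a, w)).filter (fun e => e.1 = ρ x) = ∅ := by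
            apply Finset.filter_false_of_mem
            intro e' he' hcon
            have := (hWF _ (Finset.mem_of_mem_erase he')).1
            rw [hcon] at this
            exact hρxnotH this
          rw [h0, Finset.empty_union, Finset.filter_image]
          congr 1
          apply Finset.filter_congr
          intro d hd
          obtain ⟨h1, -, -⟩ := hWF_F _ hd
          simp only [Function.comp]
          constructor
          · intro hcon; exact hinj h1 hx hcon
          · intro hcon; rw [hcon]
        rw [outDeg, this, Finset.card_image_of_injOn (hginj.mono (fun d hd => by simp only [Finset.coe_filter, Set.mem_setOf_eq] at hd; exact hd.1))]
        have h5 := (hFwires x hx hwire).2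
        rw [outDeg] at h5
        rw [← hR] at h5
        omega
  · -- encoding edge condition
    intro e' he'
    rcases key3 e' he' with ⟨heH, -⟩ | ⟨d, hd, rfl⟩
    · obtain ⟨h1, h2, -⟩ := hWF _ heH
      rw [hlabold _ h1, hlabold _ h2]
      exact hencc e' heH
    · obtain ⟨h1, h2, -⟩ := hWF_F _ hd
      have hnenc := hFnonenc d hd
      simp only [hnenc]
      simp only [hlabnew _ h1, hlabnew _ h2]
      have := hFnn d hd
      simpa using this

theorem stepOn_exists {T : DecSystem} (hT : ValidDecSystem T) {G : LabGraph} {u a w s1 s2 : ℕ}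
    (he : (u, ELab.enc a, w) ∈ G.E) (hu : G.lab u = VLab.node s1)
    (hw : G.lab w = VLab.node s2) (huw : u ≠ w) (huV : u ∈ G.V) (hwV : w ∈ G.V) :
    ∃ ρ G', StepOn T u a w s1 s2 ρ G G' := by
  set R := T.rule a s1 s2 with hR
  obtain ⟨hsrcV, htgtV, hst, hlabsrc, hlabtgt, -, -, -, -⟩ := hT a s1 s2
  set N : ℕ := G.V.sup id + 1 with hN
  have hsupb : ∀ v ∈ G.V, v < N := by
    intro v hv
    have : id v ≤ G.V.sup id := Finset.le_sup hv
    simp only [id] at this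
    omega
  set ρ : ℕ → ℕ := fun x => if x = R.src then u else if x = R.tgt then w else N + x with hρ
  have hρs : ρ R.src = u := by simp [hρ]
  have hρt : ρ R.tgt = w := by simp [hρ, hst.symm]; exact fun h => absurd h.symm hst
  have hρint : ∀ x, x ≠ R.src → x ≠ R.tgt → ρ x = N + x := by
    intro x h1 h2; simp [hρ, h1, h2]
  have hfresh : ∀ x, x ≠ R.src → x ≠ R.tgt → ρ x ∉ G.V := by
    intro x h1 h2 hcon
    rw [hρint x h1 h2] at hcon
    have := hsupb _ hcon
    omega
  have hinj : Set.InjOn ρ ↑R.F.V := by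
    intro x hx y hy hxy
    have hu' : u < N := hsupb _ huV
    have hw' : w < N := hsupb _ hwV
    have hcase : ∀ z, (z = R.src ∧ ρ z = u) ∨ (z = R.tgt ∧ ρ z = w) ∨
        (z ≠ R.src ∧ z ≠ R.tgt ∧ ρ z = N + z) := by
      intro z
      by_cases h1 : z = R.src
      · exact Or.inl ⟨h1, by rw [h1]; exact hρs⟩
      · by_cases h2 : z = R.tgt
        · exact Or.inr (Or.inl ⟨h2, by rw [h2]; exact hρt⟩)
        · exact Or.inr (Or.inr ⟨h1, h2, hρint z h1 h2⟩)
    rcases hcase x with ⟨h1, h2⟩ | ⟨h1, h2⟩ | ⟨h1, h1', h2⟩ <;>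
      rcases hcase y with ⟨h3, h4⟩ | ⟨h3, h4⟩ | ⟨h3, h3', h4⟩ <;>
      rw [h2, h4] at hxy
    all_goals first
      | exact absurd hxy huw
      | exact absurd hxy.symm huw
      | (rw [h1, h3])
      | omega
  refine ⟨ρ, ⟨G.V ∪ R.F.V.image ρ,
      (G.E.erase (u, ELab.enc a, w)) ∪ R.F.E.image (fun e => (ρ e.1, e.2.1, ρ e.2.2)),
      fun v => if v ∈ G.V then G.lab v else if N ≤ v then R.F.lab (v - N) else G.lab v⟩,
    he, hu, hw, hinj, hρs, hρt, fun x _ => hfresh x, rfl, rfl, ?_, ?_⟩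
  · intro v hv; simp [hv]
  · intro x hx
    by_cases hxs : x = R.src
    · subst hxs; rw [hρs]; simp only [huV, if_pos]; rw [hu, ← hR, hlabsrc]
    by_cases hxt : x = R.tgt
    · subst hxt; rw [hρt]; simp only [hwV, if_pos]; rw [hw, ← hR, hlabtgt]
    · rw [hρint x hxs hxt]
      have hnot : N + x ∉ G.V := by
        intro hcon; have := hsupb _ hcon; omega
      simp [hnot, hR]

theorem progress {T : DecSystem} (hT : ValidDecSystem T) {G : LabGraph}
    (hG : EncodedSG G) (hne : encCount G ≠ 0) : ∃ G', DecStep T G G' := by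
  have : (G.E.filter (fun e => e.2.1.isEnc = true)).Nonempty := by
    rw [← Finset.card_pos]; unfold encCount at hne; omega
  obtain ⟨e, he⟩ := this
  rw [Finset.mem_filter] at he
  obtain ⟨heE, henc⟩ := he
  obtain ⟨a, ha⟩ := isEnc_iff.mp henc
  have hcond := hG.2.2.2 e heE
  rw [if_pos henc] at hcond
  obtain ⟨s1, hs1⟩ := isNode_iff.mp hcond.1
  obtain ⟨s2, hs2⟩ := isNode_iff.mp hcond.2
  obtain ⟨h1, h2, h3⟩ := hG.1 e heE
  have heE' : (e.1, ELab.enc a, e.2.2) ∈ G.E := by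
    have : e = (e.1, ELab.enc a, e.2.2) := by
      rw [Prod.ext_iff, Prod.ext_iff]; exact ⟨rfl, ha, rfl⟩
    rwa [← this]
  obtain ⟨ρ, G', hs⟩ := stepOn_exists hT heE' hs1 hs2 h3 h1 h2
  exact ⟨G', decStep_iff.mpr ⟨_, _, _, _, _, _, hs⟩⟩

theorem master {T : DecSystem} (hT : ValidDecSystem T)
    {u a w s1 s2 : ℕ} {ρ ρ₂ : ℕ → ℕ} {H H' K K' : LabGraph} {f : ℕ → ℕ}
    (hWFH : WellFormed H) (hWFK : WellFormed K)
    (hbij : Set.BijOn f ↑H.V ↑K.V) (hlab : ∀ v ∈ H.V, K.lab (f v) = H.lab v)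
    (hedge : ∀ p l q, p ∈ H.V → q ∈ H.V → ((p, l, q) ∈ H.E ↔ (f p, l, f q) ∈ K.E))
    (h1 : StepOn T u a w s1 s2 ρ H H')
    (h2 : StepOn T (f u) a (f w) s1 s2 ρ₂ K K') :
    ∃ g : ℕ → ℕ, (∀ v ∈ H.V, g v = f v) ∧ Set.BijOn g ↑H'.V ↑K'.V ∧
      (∀ v ∈ H'.V, K'.lab (g v) = H'.lab v) ∧
      (∀ p l q, p ∈ H'.V → q ∈ H'.V → ((p, l, q) ∈ H'.E ↔ (g p, l, g q) ∈ K'.E)) := by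
  classical
  obtain ⟨he, hu, hw, hinj, hρs, hρt, hfresh, hV, hE, hlabold, hlabnew⟩ := h1
  obtain ⟨he₂, hu₂, hw₂, hinj₂, hρs₂, hρt₂, hfresh₂, hV₂, hE₂, hlabold₂, hlabnew₂⟩ := h2
  set R := T.rule a s1 s2 with hR
  obtain ⟨hsrcV, htgtV, hst, hlabsrc, hlabtgt, ⟨hWF_F, -, -, -, -⟩, -, -, -⟩ := hT a s1 s2
  have huV : u ∈ H.V := (hWFH _ he).1
  have hwV : w ∈ H.V := (hWFH _ he).2.1
  have huw : u ≠ w := (hWFH _ he).2.2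
  have key1 : ∀ x ∈ R.F.V, ρ x ∈ H.V → x = R.src ∨ x = R.tgt := by
    intro x hx hρx
    by_contra hc
    push_neg at hc
    exact hfresh x hx hc.1 hc.2 hρx
  have key2 : ∀ v ∈ H'.V, v ∈ H.V ∨
      ∃ x ∈ R.F.V, x ≠ R.src ∧ x ≠ R.tgt ∧ v = ρ x := by
    intro v hv
    rw [hV, Finset.mem_union] at hv
    rcases hv with hv | hv
    · exact Or.inl hv
    · rw [Finset.mem_image] at hv
      obtain ⟨x, hx, rfl⟩ := hv
      by_cases hxs : x = R.src
      · subst hxs; rw [hρs]; exact Or.inl huV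
      by_cases hxt : x = R.tgt
      · subst hxt; rw [hρt]; exact Or.inl hwV
      · exact Or.inr ⟨x, hx, hxs, hxt, rfl⟩
  set g : ℕ → ℕ := fun v =>
    if v ∈ H.V then f v
    else if hex : ∃ x, x ∈ R.F.V ∧ ρ x = v then ρ₂ hex.choose else v with hg
  have gold : ∀ v ∈ H.V, g v = f v := by intro v hv; simp [hg, hv]
  have gspec : ∀ x ∈ R.F.V, g (ρ x) = ρ₂ x := by
    intro x hx
    by_cases hmem : ρ x ∈ H.V
    · rcases key1 x hx hmem with hc | hc
      · subst hc; rw [hρs, gold u huV, hρs₂]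
      · subst hc; rw [hρt, gold w hwV, hρt₂]
    · have hex : ∃ y, y ∈ R.F.V ∧ ρ y = ρ x := ⟨x, hx, rfl⟩
      have : g (ρ x) = ρ₂ hex.choose := by simp [hg, hmem, hex]
      rw [this]
      have hc := hex.choose_spec
      congr 1
      exact hinj (by exact_mod_cast hc.1) hx hc.2
  -- interior images avoid K.V
  have hint₂ : ∀ x ∈ R.F.V, x ≠ R.src → x ≠ R.tgt → ρ₂ x ∉ K.V := hfresh₂
  -- p recovered from g p = ρ₂ x
  have grec : ∀ p ∈ H'.V, ∀ x ∈ R.F.V, g p = ρ₂ x → p = ρ x := by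
    intro p hp x hx hgp
    rcases key2 p hp with hpH | ⟨y, hy, hys, hyt, rfl⟩
    · rw [gold p hpH] at hgp
      by_cases hxs : x = R.src
      · subst hxs; rw [hρs₂] at hgp
        rw [hρs]; exact hbij.injOn hpH huV hgp
      by_cases hxt : x = R.tgt
      · subst hxt; rw [hρt₂] at hgp
        rw [hρt]; exact hbij.injOn hpH hwV hgp
      · exact absurd (hgp ▸ hbij.mapsTo hpH) (hint₂ x hx hxs hxt)
    · rw [gspec y hy] at hgp
      congr 1
      exact hinj₂ (by exact_mod_cast hy) hx hgp
  have hmapsto : Set.MapsTo g ↑H'.V ↑K'.V := by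
    intro v hv
    rcases key2 v (by exact_mod_cast hv) with hvH | ⟨x, hx, -, -, rfl⟩
    · rw [gold v hvH]
      have : f v ∈ K.V := hbij.mapsTo hvH
      rw [hV₂]; simp [this]
    · rw [gspec x hx, hV₂]
      simp only [Finset.coe_union, Set.mem_union, Finset.mem_coe]
      exact Or.inr (Finset.mem_image_of_mem _ hx)
  refine ⟨g, gold, ⟨hmapsto, ?_, ?_⟩, ?_, ?_⟩
  · -- InjOn
    intro p hp q hq hpq
    rcases key2 p (by exact_mod_cast hp) with hpH | ⟨x, hx, hxs, hxt, rfl⟩ <;>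
      rcases key2 q (by exact_mod_cast hq) with hqH | ⟨y, hy, hys, hyt, rfl⟩
    · rw [gold p hpH, gold q hqH] at hpq
      exact hbij.injOn hpH hqH hpq
    · rw [gold p hpH, gspec y hy] at hpq
      exact absurd (hpq ▸ hbij.mapsTo hpH) (hint₂ y hy hys hyt)
    · rw [gspec x hx, gold q hqH] at hpq
      have hKV := hbij.mapsTo hqH
      rw [← hpq] at hKV
      exact absurd hKV (hint₂ x hx hxs hxt)
    · rw [gspec x hx, gspec y hy] at hpq
      rw [hinj₂ (by exact_mod_cast hx) (by exact_mod_cast hy) hpq]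
  · -- SurjOn
    intro k hk
    rw [Finset.mem_coe, hV₂, Finset.mem_union] at hk
    rcases hk with hk | hk
    · obtain ⟨v, hvH, hfv⟩ := hbij.surjOn hk
      refine ⟨v, ?_, ?_⟩
      · rw [Finset.mem_coe, hV]; simp only [Finset.mem_union]
        exact Or.inl (by exact_mod_cast hvH)
      · rw [gold v (by exact_mod_cast hvH)]; exact hfv
    · rw [Finset.mem_image] at hk
      obtain ⟨x, hx, rfl⟩ := hk
      refine ⟨ρ x, ?_, gspec x hx⟩
      rw [Finset.mem_coe, hV, Finset.mem_union]
      exact Or.inr (Finset.mem_image_of_mem _ hx)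
  · -- labels
    intro v hv
    rcases key2 v hv with hvH | ⟨x, hx, -, -, rfl⟩
    · rw [gold v hvH, hlabold v hvH, ← hlab v hvH]
      exact hlabold₂ _ (by exact_mod_cast hbij.mapsTo hvH)
    · rw [gspec x hx, hlabnew x hx, hlabnew₂ x hx]
  · -- edges
    intro p l q hp hq
    constructor
    · intro hpq
      rw [hE, Finset.mem_union] at hpq
      rcases hpq with hpq | hpq
      · rw [Finset.mem_erase] at hpq
        obtain ⟨hne, hmem⟩ := hpq
        have hpH : p ∈ H.V := (hWFH _ hmem).1
        have hqH : q ∈ H.V := (hWFH _ hmem).2.1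
        rw [gold p hpH, gold q hqH, hE₂, Finset.mem_union]
        left
        rw [Finset.mem_erase]
        refine ⟨?_, (hedge p l q hpH hqH).mp hmem⟩
        intro hcon
        simp only [Prod.mk.injEq] at hcon
        obtain ⟨hc1, hc2, hc3⟩ := hcon
        apply hne
        simp only [Prod.mk.injEq]
        exact ⟨hbij.injOn hpH huV hc1, hc2, hbij.injOn hqH hwV hc3⟩
      · rw [Finset.mem_image] at hpq
        obtain ⟨d, hd, hdd⟩ := hpq
        simp only [Prod.mk.injEq] at hdd
        obtain ⟨hd1, hd2, hd3⟩ := hdd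
        obtain ⟨hdV1, hdV2, -⟩ := hWF_F _ hd
        rw [hE₂, Finset.mem_union]
        right
        rw [Finset.mem_image]
        refine ⟨d, hd, ?_⟩
        simp only [Prod.mk.injEq]
        refine ⟨?_, hd2, ?_⟩
        · rw [← hd1, gspec _ hdV1]
        · rw [← hd3, gspec _ hdV2]
    · intro hpq
      rw [hE₂, Finset.mem_union] at hpq
      rcases hpq with hpq | hpq
      · rw [Finset.mem_erase] at hpq
        obtain ⟨hne, hmem⟩ := hpq
        have hgpK : g p ∈ K.V := (hWFK _ hmem).1
        have hgqK : g q ∈ K.V := (hWFK _ hmem).2.1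
        have hpH : p ∈ H.V := by
          rcases key2 p hp with h | ⟨x, hx, hxs, hxt, rfl⟩
          · exact h
          · rw [gspec x hx] at hgpK
            exact absurd hgpK (hint₂ x hx hxs hxt)
        have hqH : q ∈ H.V := by
          rcases key2 q hq with h | ⟨x, hx, hxs, hxt, rfl⟩
          · exact h
          · rw [gspec x hx] at hgqK
            exact absurd hgqK (hint₂ x hx hxs hxt)
        rw [gold p hpH, gold q hqH] at hmem hne
        have hHE : (p, l, q) ∈ H.E := (hedge p l q hpH hqH).mpr hmem
        rw [hE, Finset.mem_union]
        left
        rw [Finset.mem_erase]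
        refine ⟨?_, hHE⟩
        intro hcon
        simp only [Prod.mk.injEq] at hcon
        obtain ⟨hc1, hc2, hc3⟩ := hcon
        apply hne
        simp only [Prod.mk.injEq]
        exact ⟨by rw [hc1], hc2, by rw [hc3]⟩
      · rw [Finset.mem_image] at hpq
        obtain ⟨d, hd, hdd⟩ := hpq
        simp only [Prod.mk.injEq] at hdd
        obtain ⟨hd1, hd2, hd3⟩ := hdd
        obtain ⟨hdV1, hdV2, -⟩ := hWF_F _ hd
        have hp' : p = ρ d.1 := grec p hp d.1 hdV1 hd1.symm
        have hq' : q = ρ d.2.2 := grec q hq d.2.2 hdV2 hd3.symm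
        rw [hE, Finset.mem_union]
        right
        rw [Finset.mem_image]
        refine ⟨d, hd, ?_⟩
        simp only [Prod.mk.injEq]
        exact ⟨hp'.symm, hd2, hq'.symm⟩

theorem master_giso {T : DecSystem} (hT : ValidDecSystem T)
    {u a w s1 s2 : ℕ} {ρ ρ₂ : ℕ → ℕ} {H H' K K' : LabGraph} {f : ℕ → ℕ}
    (hWFH : WellFormed H) (hWFK : WellFormed K)
    (hbij : Set.BijOn f ↑H.V ↑K.V) (hlab : ∀ v ∈ H.V, K.lab (f v) = H.lab v)
    (hedge : ∀ p l q, p ∈ H.V → q ∈ H.V → ((p, l, q) ∈ H.E ↔ (f p, l, f q) ∈ K.E))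
    (h1 : StepOn T u a w s1 s2 ρ H H')
    (h2 : StepOn T (f u) a (f w) s1 s2 ρ₂ K K') : GIso H' K' := by
  obtain ⟨g, -, hb, hl, he⟩ := master hT hWFH hWFK hbij hlab hedge h1 h2
  exact ⟨g, hb, hl, he⟩

theorem decStep_preserves {T : DecSystem} (hT : ValidDecSystem T) {H H' : LabGraph}
    (h : DecStep T H H') (hH : EncodedSG H) : EncodedSG H' := by
  obtain ⟨u, a, w, s1, s2, ρ, hs⟩ := decStep_iff.mp h
  exact stepOn_preserves hT hs hH

theorem reach_preserves {T : DecSystem} (hT : ValidDecSystem T) {H N : LabGraph}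
    (h : Relation.ReflTransGen (DecStep T) H N) (hH : EncodedSG H) : EncodedSG N := by
  induction h with
  | refl => exact hH
  | tail _ hstep ih => exact decStep_preserves hT hstep ih

theorem nf_no_step {T : DecSystem} (hT : ValidDecSystem T) {H H' : LabGraph}
    (h0 : encCount H = 0) (h : DecStep T H H') : False := by
  obtain ⟨u, a, w, s1, s2, ρ, hs⟩ := decStep_iff.mp h
  have := stepOn_encCount hT hs
  omega

theorem nf_reach_eq {T : DecSystem} (hT : ValidDecSystem T) {H N : LabGraph}
    (h0 : encCount H = 0) (h : Relation.ReflTransGen (DecStep T) H N) : N = H := by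
  rcases Relation.ReflTransGen.cases_head h with h | ⟨c, hstep, -⟩
  · exact h.symm
  · exact absurd hstep (fun hc => nf_no_step hT h0 hc)

theorem normalizeSG {T : DecSystem} (hT : ValidDecSystem T) :
    ∀ n (H : LabGraph), encCount H ≤ n → EncodedSG H →
      ∃ N, Relation.ReflTransGen (DecStep T) H N ∧ encCount N = 0 ∧ EncodedSG N := by
  intro n
  induction n with
  | zero =>
    intro H h0 hH
    exact ⟨H, Relation.ReflTransGen.refl, Nat.le_zero.mp h0, hH⟩
  | succ k ih =>
    intro H h0 hH
    by_cases hz : encCount H = 0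
    · exact ⟨H, Relation.ReflTransGen.refl, hz, hH⟩
    · obtain ⟨H', hstep⟩ := progress hT hH hz
      obtain ⟨u, a, w, s1, s2, ρ, hs⟩ := decStep_iff.mp hstep
      have hc := stepOn_encCount hT hs
      obtain ⟨N, hr, hn0, hN⟩ := ih H' (by omega) (stepOn_preserves hT hs hH)
      exact ⟨N, Relation.ReflTransGen.head hstep hr, hn0, hN⟩

theorem iso_step {T : DecSystem} (hT : ValidDecSystem T) {H H' K : LabGraph}
    (hH : EncodedSG H) (hK : EncodedSG K) (hiso : GIso H K) (h : DecStep T H H') :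
    ∃ K', DecStep T K K' ∧ GIso H' K' := by
  obtain ⟨f, hbij, hlab, hedge⟩ := hiso
  obtain ⟨u, a, w, s1, s2, ρ, hs⟩ := decStep_iff.mp h
  have he := hs.1
  have huV : u ∈ H.V := (hH.1 _ he).1
  have hwV : w ∈ H.V := (hH.1 _ he).2.1
  have huw : u ≠ w := (hH.1 _ he).2.2
  have he₂ : (f u, ELab.enc a, f w) ∈ K.E := (hedge u _ w huV hwV).mp he
  have hu₂ : K.lab (f u) = VLab.node s1 := by rw [hlab u huV]; exact hs.2.1
  have hw₂ : K.lab (f w) = VLab.node s2 := by rw [hlab w hwV]; exact hs.2.2.1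
  have hfuw : f u ≠ f w := fun hc => huw (hbij.injOn huV hwV hc)
  obtain ⟨ρ₂, K', hs₂⟩ := stepOn_exists hT he₂ hu₂ hw₂ hfuw
    (by exact_mod_cast hbij.mapsTo huV) (by exact_mod_cast hbij.mapsTo hwV)
  exact ⟨K', decStep_iff.mpr ⟨_, _, _, _, _, _, hs₂⟩,
    master_giso hT hH.1 hK.1 hbij hlab hedge hs hs₂⟩

theorem iso_reach {T : DecSystem} (hT : ValidDecSystem T) {H N : LabGraph}
    (h : Relation.ReflTransGen (DecStep T) H N) :
    ∀ {K : LabGraph}, EncodedSG H → EncodedSG K → GIso H K →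
      ∃ N', Relation.ReflTransGen (DecStep T) K N' ∧ GIso N N' := by
  induction h using Relation.ReflTransGen.head_induction_on with
  | refl => intro K _ _ hiso; exact ⟨K, Relation.ReflTransGen.refl, hiso⟩
  | head hstep htail ih =>
    intro K hH hK hiso
    obtain ⟨K₁, hK₁step, hiso₁⟩ := iso_step hT hH hK hiso hstep
    obtain ⟨N', hr, hi⟩ := ih (decStep_preserves hT hstep hH)
      (decStep_preserves hT hK₁step hK) hiso₁
    exact ⟨N', Relation.ReflTransGen.head hK₁step hr, hi⟩

theorem swap_step {T : DecSystem} (hT : ValidDecSystem T)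
    {H C₂ D₂ : LabGraph} {u₁ a₁ w₁ s11 s12 u₂ a₂ w₂ s21 s22 : ℕ} {ρ₂ ρ₁ : ℕ → ℕ}
    (hH : EncodedSG H)
    (h2 : StepOn T u₂ a₂ w₂ s21 s22 ρ₂ H C₂)
    (h12 : StepOn T u₁ a₁ w₁ s11 s12 ρ₁ C₂ D₂)
    (hne : (u₁, ELab.enc a₁, w₁) ≠ (u₂, ELab.enc a₂, w₂)) :
    ∃ L, StepOn T u₁ a₁ w₁ s11 s12 ρ₁ H L ∧ StepOn T u₂ a₂ w₂ s21 s22 ρ₂ L D₂ := by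
  obtain ⟨he₂, hu₂, hw₂, hinj₂, hρs₂, hρt₂, hfresh₂, hV₂, hE₂, hlabold₂, hlabnew₂⟩ := h2
  obtain ⟨he₁, hu₁, hw₁, hinj₁, hρs₁, hρt₁, hfresh₁, hV₁, hE₁, hlabold₁, hlabnew₁⟩ := h12
  have himg₂ne : ∀ d ∈ (T.rule a₂ s21 s22).F.E,
      (fun e => (ρ₂ e.1, e.2.1, ρ₂ e.2.2)) d ≠ (u₁, ELab.enc a₁, w₁) := by
    intro d hd hc
    have := frag_nonenc hT a₂ s21 s22 d hd
    have : d.2.1 = ELab.enc a₁ := congrArg (fun e => e.2.1) hc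
    simp_all [ELab.isEnc]
  have himg₁ne : ∀ d ∈ (T.rule a₁ s11 s12).F.E,
      (fun e => (ρ₁ e.1, e.2.1, ρ₁ e.2.2)) d ≠ (u₂, ELab.enc a₂, w₂) := by
    intro d hd hc
    have := frag_nonenc hT a₁ s11 s12 d hd
    have : d.2.1 = ELab.enc a₂ := congrArg (fun e => e.2.1) hc
    simp_all [ELab.isEnc]
  -- the first edge already exists in H
  have he₁H : (u₁, ELab.enc a₁, w₁) ∈ H.E := by
    rw [hE₂, Finset.mem_union] at he₁
    rcases he₁ with h | h
    · exact Finset.mem_of_mem_erase h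
    · rw [Finset.mem_image] at h
      obtain ⟨d, hd, hdd⟩ := h
      exact absurd hdd (himg₂ne d hd)
  have hu₁V : u₁ ∈ H.V := (hH.1 _ he₁H).1
  have hw₁V : w₁ ∈ H.V := (hH.1 _ he₁H).2.1
  have hu₂V : u₂ ∈ H.V := (hH.1 _ he₂).1
  have hw₂V : w₂ ∈ H.V := (hH.1 _ he₂).2.1
  have hsub₂ : H.V ⊆ C₂.V := by rw [hV₂]; exact Finset.subset_union_left
  obtain ⟨hsrc₂V, htgt₂V, -, -, -, -, -, -, -⟩ := hT a₂ s21 s22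
  refine ⟨⟨H.V ∪ (T.rule a₁ s11 s12).F.V.image ρ₁,
      (H.E.erase (u₁, ELab.enc a₁, w₁)) ∪
        (T.rule a₁ s11 s12).F.E.image (fun e => (ρ₁ e.1, e.2.1, ρ₁ e.2.2)),
      D₂.lab⟩, ⟨he₁H, ?_, ?_, hinj₁, hρs₁, hρt₁, ?_, rfl, rfl, ?_, ?_⟩,
    ⟨?_, ?_, ?_, hinj₂, hρs₂, hρt₂, ?_, ?_, ?_, fun v _ => rfl, ?_⟩⟩
  · rw [← hu₁, hlabold₂ _ hu₁V]
  · rw [← hw₁, hlabold₂ _ hw₁V]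
  · intro x hx hxs hxt hc
    exact hfresh₁ x hx hxs hxt (hsub₂ hc)
  · intro v hv
    simp only
    rw [hlabold₁ v (hsub₂ hv), hlabold₂ v hv]
  · intro x hx
    simp only
    rw [hlabnew₁ x hx]
  · -- second edge in L
    simp only [Finset.mem_union, Finset.mem_erase]
    exact Or.inl ⟨fun hc => hne hc.symm, he₂⟩
  · simp only
    have : ρ₂ (T.rule a₂ s21 s22).src ∈ C₂.V := by
      rw [hV₂, Finset.mem_union]
      exact Or.inr (Finset.mem_image_of_mem _ hsrc₂V)
    rw [hρs₂] at this
    rw [hlabold₁ u₂ this, hlabold₂ u₂ hu₂V]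
    exact hu₂
  · simp only
    have : ρ₂ (T.rule a₂ s21 s22).tgt ∈ C₂.V := by
      rw [hV₂, Finset.mem_union]
      exact Or.inr (Finset.mem_image_of_mem _ htgt₂V)
    rw [hρt₂] at this
    rw [hlabold₁ w₂ this, hlabold₂ w₂ hw₂V]
    exact hw₂
  · -- freshness of ρ₂ wrt L.V
    intro x hx hxs hxt hc
    simp only [Finset.mem_union, Finset.mem_image] at hc
    rcases hc with hc | ⟨y, hy, hyc⟩
    · exact hfresh₂ x hx hxs hxt hc
    · obtain ⟨hsrc₁V, htgt₁V, -, -, -, -, -, -, -⟩ := hT a₁ s11 s12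
      have hρ₂C : ρ₂ x ∈ C₂.V := by
        rw [hV₂, Finset.mem_union]
        exact Or.inr (Finset.mem_image_of_mem _ hx)
      by_cases hys : y = (T.rule a₁ s11 s12).src
      · subst hys; rw [hρs₁] at hyc
        exact hfresh₂ x hx hxs hxt (hyc ▸ hu₁V)
      by_cases hyt : y = (T.rule a₁ s11 s12).tgt
      · subst hyt; rw [hρt₁] at hyc
        exact hfresh₂ x hx hxs hxt (hyc ▸ hw₁V)
      · exact hfresh₁ y hy hys hyt (hyc ▸ hρ₂C)
  · -- vertex set equation
    rw [hV₁, hV₂]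
    ext v
    simp only [Finset.mem_union]
    tauto
  · -- edge set equation
    rw [hE₁, hE₂]
    have h1 : ∀ x, (∃ d ∈ (T.rule a₂ s21 s22).F.E, (ρ₂ d.1, d.2.1, ρ₂ d.2.2) = x) →
        x ≠ (u₁, ELab.enc a₁, w₁) := by
      rintro x ⟨d, hd, rfl⟩; exact himg₂ne d hd
    have h2 : ∀ x, (∃ d ∈ (T.rule a₁ s11 s12).F.E, (ρ₁ d.1, d.2.1, ρ₁ d.2.2) = x) →
        x ≠ (u₂, ELab.enc a₂, w₂) := by
      rintro x ⟨d, hd, rfl⟩; exact himg₁ne d hd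
    ext x
    simp only [Finset.mem_union, Finset.mem_erase, Finset.mem_image]
    constructor
    · rintro (⟨hx1, hin⟩ | himg)
      · rcases hin with ⟨hx2, hx3⟩ | himg2
        · exact Or.inl ⟨hx2, Or.inl ⟨hx1, hx3⟩⟩
        · exact Or.inr himg2
      · exact Or.inl ⟨h2 x himg, Or.inr himg⟩
    · rintro (⟨hx2, hin⟩ | himg)
      · rcases hin with ⟨hx1, hx3⟩ | himg1
        · exact Or.inl ⟨hx1, Or.inl ⟨hx2, hx3⟩⟩
        · exact Or.inr himg1
      · exact Or.inl ⟨h1 x himg, Or.inr himg⟩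
  · -- labels of new part
    intro x hx
    have : ρ₂ x ∈ C₂.V := by
      rw [hV₂, Finset.mem_union]
      exact Or.inr (Finset.mem_image_of_mem _ hx)
    rw [hlabold₁ _ this, hlabnew₂ x hx]

theorem nf_unique {T : DecSystem} (hT : ValidDecSystem T) :
    ∀ n (H : LabGraph), encCount H ≤ n → EncodedSG H →
      ∀ N₁ N₂, Relation.ReflTransGen (DecStep T) H N₁ →
        Relation.ReflTransGen (DecStep T) H N₂ →
        encCount N₁ = 0 → encCount N₂ = 0 → GIso N₁ N₂ := by
  intro n
  induction n with
  | zero =>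
    intro H h0 hH N₁ N₂ hr1 hr2 _ _
    have h00 : encCount H = 0 := Nat.le_zero.mp h0
    rw [nf_reach_eq hT h00 hr1, nf_reach_eq hT h00 hr2]
    exact giso_refl H
  | succ k ih =>
    intro H h0 hH N₁ N₂ hr1 hr2 hn1 hn2
    rcases Relation.ReflTransGen.cases_head hr1 with heq | ⟨C₁, hst1, hr1'⟩
    · subst heq
      rw [nf_reach_eq hT hn1 hr2]
      exact giso_refl _
    rcases Relation.ReflTransGen.cases_head hr2 with heq | ⟨C₂, hst2, hr2'⟩
    · subst heq
      exact absurd hst1 (fun hc => nf_no_step hT hn2 hc)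
    obtain ⟨u₁, a₁, w₁, s11, s12, ρ₁, hs1⟩ := decStep_iff.mp hst1
    obtain ⟨u₂, a₂, w₂, s21, s22, ρ₂, hs2⟩ := decStep_iff.mp hst2
    have hC₁ : EncodedSG C₁ := stepOn_preserves hT hs1 hH
    have hC₂ : EncodedSG C₂ := stepOn_preserves hT hs2 hH
    have hec1 := stepOn_encCount hT hs1
    have hec2 := stepOn_encCount hT hs2
    have hC₁k : encCount C₁ ≤ k := by omega
    have hC₂k : encCount C₂ ≤ k := by omega
    by_cases hee : (u₁, ELab.enc a₁, w₁) = (u₂, ELab.enc a₂, w₂)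
    · -- same edge chosen
      have h1 : u₁ = u₂ := congrArg (fun e => e.1) hee
      have h3 : w₁ = w₂ := congrArg (fun e => e.2.2) hee
      have h2 : a₁ = a₂ := by
        have := congrArg (fun e => e.2.1) hee
        simpa using this
      subst h1; subst h2; subst h3
      have hs11 : s11 = s21 := VLab.node.inj (hs1.2.1.symm.trans hs2.2.1)
      have hs12 : s12 = s22 := VLab.node.inj (hs1.2.2.1.symm.trans hs2.2.2.1)
      subst hs11; subst hs12
      have hgiso : GIso C₁ C₂ := master_giso hT hH.1 hH.1 (Set.bijOn_id _)
        (fun _ _ => rfl) (fun _ _ _ _ _ => Iff.rfl) hs1 hs2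
      obtain ⟨N₂', hrN₂', hisoN⟩ := iso_reach hT hr2' hC₂ hC₁ (giso_symm hgiso)
      have hN₂SG : EncodedSG N₂ := reach_preserves hT hr2' hC₂
      have hN₂'SG : EncodedSG N₂' := reach_preserves hT hrN₂' hC₁
      have hN₂'0 : encCount N₂' = 0 := by
        rw [← giso_encCount hN₂SG.1 hN₂'SG.1 hisoN]; exact hn2
      exact giso_trans (ih C₁ hC₁k hC₁ N₁ N₂' hr1' hrN₂' hn1 hN₂'0) (giso_symm hisoN)
    · -- different edges
      have he₂C₁ : (u₂, ELab.enc a₂, w₂) ∈ C₁.E := by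
        rw [hs1.2.2.2.2.2.2.2.2.1, Finset.mem_union, Finset.mem_erase]
        exact Or.inl ⟨Ne.symm hee, hs2.1⟩
      have he₁C₂ : (u₁, ELab.enc a₁, w₁) ∈ C₂.E := by
        rw [hs2.2.2.2.2.2.2.2.2.1, Finset.mem_union, Finset.mem_erase]
        exact Or.inl ⟨hee, hs1.1⟩
      have hu₂V : u₂ ∈ H.V := (hH.1 _ hs2.1).1
      have hw₂V : w₂ ∈ H.V := (hH.1 _ hs2.1).2.1
      have hu₁V : u₁ ∈ H.V := (hH.1 _ hs1.1).1
      have hw₁V : w₁ ∈ H.V := (hH.1 _ hs1.1).2.1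
      have hlold₁ := hs1.2.2.2.2.2.2.2.2.2.1
      have hlold₂ := hs2.2.2.2.2.2.2.2.2.2.1
      have hsubV₁ : H.V ⊆ C₁.V := by
        rw [hs1.2.2.2.2.2.2.2.1]; exact Finset.subset_union_left
      have hsubV₂ : H.V ⊆ C₂.V := by
        rw [hs2.2.2.2.2.2.2.2.1]; exact Finset.subset_union_left
      obtain ⟨ρ₂', D₁, hsD₁⟩ := stepOn_exists (T := T) hT he₂C₁
        (by rw [hlold₁ _ hu₂V]; exact hs2.2.1)
        (by rw [hlold₁ _ hw₂V]; exact hs2.2.2.1)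
        ((hH.1 _ hs2.1).2.2) (hsubV₁ hu₂V) (hsubV₁ hw₂V)
      obtain ⟨ρ₁'', D₂, hsD₂⟩ := stepOn_exists (T := T) hT he₁C₂
        (by rw [hlold₂ _ hu₁V]; exact hs1.2.1)
        (by rw [hlold₂ _ hw₁V]; exact hs1.2.2.1)
        ((hH.1 _ hs1.1).2.2) (hsubV₂ hu₁V) (hsubV₂ hw₁V)
      obtain ⟨L, hsHL, hsLD₁⟩ := swap_step hT hH hs1 hsD₁ (Ne.symm hee)
      have hL : EncodedSG L := stepOn_preserves hT hsHL hH
      -- iso between C₂ and L (both one-step on e₂ from H)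
      obtain ⟨g, hgid, hgbij, hglab, hgedge⟩ := master hT hH.1 hH.1 (Set.bijOn_id _)
        (fun _ _ => rfl) (fun _ _ _ _ _ => Iff.rfl) hs2 hsHL
      -- transport the step on e₁ along g
      have hgu₁ : g u₁ = u₁ := hgid u₁ hu₁V
      have hgw₁ : g w₁ = w₁ := hgid w₁ hw₁V
      have hsLD₁' : StepOn T (g u₁) a₁ (g w₁) s11 s12 ρ₁ L D₁ := by
        rw [hgu₁, hgw₁]; exact hsLD₁
      have hgisoD : GIso D₂ D₁ :=
        master_giso hT hC₂.1 hL.1 hgbij hglab hgedge hsD₂ hsLD₁'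
      -- assemble
      have hD₁ : EncodedSG D₁ := stepOn_preserves hT hsD₁ hC₁
      have hD₂ : EncodedSG D₂ := stepOn_preserves hT hsD₂ hC₂
      obtain ⟨M₁, hrD₁M₁, hM₁0, hM₁SG⟩ :=
        normalizeSG hT (encCount D₁) D₁ le_rfl hD₁
      have hstD₁ : DecStep T C₁ D₁ := decStep_iff.mpr ⟨_, _, _, _, _, _, hsD₁⟩
      have hstD₂ : DecStep T C₂ D₂ := decStep_iff.mpr ⟨_, _, _, _, _, _, hsD₂⟩
      have hN₁M₁ : GIso N₁ M₁ := ih C₁ hC₁k hC₁ N₁ M₁ hr1'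
        (Relation.ReflTransGen.head hstD₁ hrD₁M₁) hn1 hM₁0
      obtain ⟨M₂, hrD₂M₂, hM₁M₂⟩ := iso_reach hT hrD₁M₁ hD₁ hD₂ (giso_symm hgisoD)
      have hM₂SG : EncodedSG M₂ := reach_preserves hT hrD₂M₂ hD₂
      have hM₂0 : encCount M₂ = 0 := by
        rw [← giso_encCount hM₁SG.1 hM₂SG.1 hM₁M₂]; exact hM₁0
      have hN₂M₂ : GIso N₂ M₂ := ih C₂ hC₂k hC₂ N₂ M₂ hr2'
        (Relation.ReflTransGen.head hstD₂ hrD₂M₂) hn2 hM₂0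
      exact giso_trans hN₁M₁ (giso_trans hM₁M₂ (giso_symm hN₂M₂))

/-- Any decoding system is confluent and terminating as a rewrite
system on encoded string graphs. -/
theorem decoding_system_confluent_and_terminating (T : DecSystem) (hT : ValidDecSystem T) :
    (∀ H : LabGraph, EncodedSG H →
      ¬∃ f : ℕ → LabGraph, f 0 = H ∧ ∀ n, DecStep T (f n) (f (n + 1))) ∧
    (∀ H H₁ H₂ : LabGraph, EncodedSG H →
      Relation.ReflTransGen (DecStep T) H H₁ →
      Relation.ReflTransGen (DecStep T) H H₂ →
      ∃ K₁ K₂ : LabGraph, Relation.ReflTransGen (DecStep T) H₁ K₁ ∧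
        Relation.ReflTransGen (DecStep T) H₂ K₂ ∧ GIso K₁ K₂) := by
  constructor
  · intro H _
    exact no_inf_aux hT H
  · intro H H₁ H₂ hH hr1 hr2
    have hH₁ := reach_preserves hT hr1 hH
    have hH₂ := reach_preserves hT hr2 hH
    obtain ⟨K₁, hrK₁, hK₁0, -⟩ := normalizeSG hT (encCount H₁) H₁ le_rfl hH₁
    obtain ⟨K₂, hrK₂, hK₂0, -⟩ := normalizeSG hT (encCount H₂) H₂ le_rfl hH₂
    exact ⟨K₁, K₂, hrK₁, hrK₂,
      nf_unique hT (encCount H) H le_rfl hH K₁ K₂ (hr1.trans hrK₁) (hr2.trans hrK₂) hK₁0 hK₂0⟩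
end

section
/- If H' is obtained from an encoded string graph H by a full decoding, then H' is a string graph whose inputs and outputs are exactly the inputs and outputs of H: decoding neither creates nor destroys inputs or outputs. -/
/-- The set of inputs (wire-vertices of in-degree 0) of a graph. -/
def inputs (H : LabGraph) : Finset ℕ :=
  H.V.filter (fun v => (H.lab v).isWire = true ∧ inDeg H v = 0)

/-- The set of outputs (wire-vertices of out-degree 0) of a graph. -/
def outputs (H : LabGraph) : Finset ℕ :=
  H.V.filter (fun v => (H.lab v).isWire = true ∧ outDeg H v = 0)


lemma enc_done {H : LabGraph} (hH : EncodedSG H) (h0 : encCount H = 0) : StringGraph H := by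
  obtain ⟨hWF, hlab, hwire, hif⟩ := hH
  have hno : ∀ e ∈ H.E, e.2.1.isEnc = false := by
    intro e he
    by_contra hc
    have hmem : e ∈ H.E.filter (fun e => e.2.1.isEnc = true) :=
      Finset.mem_filter.mpr ⟨he, by simpa using hc⟩
    unfold encCount at h0
    rw [Finset.card_eq_zero] at h0
    rw [h0] at hmem
    exact absurd hmem (Finset.notMem_empty e)
  refine ⟨hWF, hlab, hwire, hno, ?_⟩
  intro e he
  have h := hif e he
  rw [hno e he] at h
  simpa using h

lemma step_preserves (T : DecSystem) (hT : ValidDecSystem T) {H H' : LabGraph}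
    (hH : EncodedSG H) (hs : DecStep T H H') :
    EncodedSG H' ∧ inputs H' = inputs H ∧ outputs H' = outputs H := by
  obtain ⟨u, a, w, s1, s2, he, hu, hw, ρ, hinj, hρs, hρt, hfresh, hV, hE, hlab, hlabρ⟩ := hs
  obtain ⟨hsV, htV, hst, hls, hlt, hSG, hcard, hnodes, hwires⟩ := hT a s1 s2
  set R := T.rule a s1 s2 with hRdef
  obtain ⟨hWF_F, hFlab, hFwire, hFenc, hFnn⟩ := hSG
  obtain ⟨hWF, hlabH, hwireH, hifH⟩ := hH
  have huV : u ∈ H.V := (hWF _ he).1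
  have hwV : w ∈ H.V := (hWF _ he).2.1
  have huw : u ≠ w := (hWF _ he).2.2
  have hwireu : ∀ v, (H.lab v).isWire = true → v ≠ u := by
    intro v hv hvu; rw [hvu, hu] at hv; simp [VLab.isWire] at hv
  have hwirew : ∀ v, (H.lab v).isWire = true → v ≠ w := by
    intro v hv hvw; rw [hvw, hw] at hv; simp [VLab.isWire] at hv
  have hfresh' : ∀ x ∈ R.F.V, ρ x ∈ H.V → x = R.src ∨ x = R.tgt := by
    intro x hx hρx
    by_contra hc
    push_neg at hc
    exact hfresh x hx hc.1 hc.2 hρx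
  have hnotst : ∀ x, ρ x ∉ H.V → x ≠ R.src ∧ x ≠ R.tgt := by
    intro x hx
    constructor
    · rintro rfl; exact hx (by rw [hρs]; exact huV)
    · rintro rfl; exact hx (by rw [hρt]; exact hwV)
  -- filters for old wire vertices
  have hfiltin : ∀ v ∈ H.V, (H.lab v).isWire = true →
      H'.E.filter (fun e => e.2.2 = v) = H.E.filter (fun e => e.2.2 = v) := by
    intro v hvV hvw
    ext e
    simp only [Finset.mem_filter, hE, Finset.mem_union, Finset.mem_erase, Finset.mem_image]
    constructor
    · rintro ⟨h1 | ⟨f, hf, rfl⟩, h2⟩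
      · exact ⟨h1.2, h2⟩
      · exfalso
        have hf2 : f.2.2 ∈ R.F.V := (hWF_F _ hf).2.1
        have hmem : ρ f.2.2 ∈ H.V := by
          simp only at h2; rw [h2]; exact hvV
        rcases hfresh' f.2.2 hf2 hmem with h | h
        · exact hwireu v hvw (by rw [← h2, h, hρs])
        · exact hwirew v hvw (by rw [← h2, h, hρt])
    · rintro ⟨h1, h2⟩
      refine ⟨Or.inl ⟨?_, h1⟩, h2⟩
      intro heq
      rw [heq] at h2
      exact hwirew v hvw (by simp only at h2; rw [← h2])
  have hfiltout : ∀ v ∈ H.V, (H.lab v).isWire = true →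
      H'.E.filter (fun e => e.1 = v) = H.E.filter (fun e => e.1 = v) := by
    intro v hvV hvw
    ext e
    simp only [Finset.mem_filter, hE, Finset.mem_union, Finset.mem_erase, Finset.mem_image]
    constructor
    · rintro ⟨h1 | ⟨f, hf, rfl⟩, h2⟩
      · exact ⟨h1.2, h2⟩
      · exfalso
        have hf1 : f.1 ∈ R.F.V := (hWF_F _ hf).1
        have hmem : ρ f.1 ∈ H.V := by
          simp only at h2; rw [h2]; exact hvV
        rcases hfresh' f.1 hf1 hmem with h | h
        · exact hwireu v hvw (by rw [← h2, h, hρs])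
        · exact hwirew v hvw (by rw [← h2, h, hρt])
    · rintro ⟨h1, h2⟩
      refine ⟨Or.inl ⟨?_, h1⟩, h2⟩
      intro heq
      rw [heq] at h2
      exact hwireu v hvw (by simp only at h2; rw [← h2])
  have hdegold : ∀ v ∈ H.V, (H.lab v).isWire = true →
      inDeg H' v = inDeg H v ∧ outDeg H' v = outDeg H v := by
    intro v hvV hvw
    constructor
    · unfold inDeg; rw [hfiltin v hvV hvw]
    · unfold outDeg; rw [hfiltout v hvV hvw]
  -- injectivity of edge map
  have hinjE : ∀ f ∈ R.F.E, ∀ g ∈ R.F.E,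
      (ρ f.1, f.2.1, ρ f.2.2) = (ρ g.1, g.2.1, ρ g.2.2) → f = g := by
    intro f hf g hg hfg
    have h1 := congrArg Prod.fst hfg
    have h2 := congrArg (fun p => p.2.1) hfg
    have h3 := congrArg (fun p => p.2.2) hfg
    simp only at h1 h2 h3
    have e1 : f.1 = g.1 := hinj (hWF_F f hf).1 (hWF_F g hg).1 h1
    have e3 : f.2.2 = g.2.2 := hinj (hWF_F f hf).2.1 (hWF_F g hg).2.1 h3
    exact Prod.ext e1 (Prod.ext h2 e3)
  -- degrees at fresh vertices
  have hdegfresh : ∀ x ∈ R.F.V, x ≠ R.src → x ≠ R.tgt →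
      inDeg H' (ρ x) = inDeg R.F x ∧ outDeg H' (ρ x) = outDeg R.F x := by
    intro x hx hxs hxt
    have hρx : ρ x ∉ H.V := hfresh x hx hxs hxt
    constructor
    · unfold inDeg
      have hset : H'.E.filter (fun e => e.2.2 = ρ x) =
          (R.F.E.filter (fun e => e.2.2 = x)).image (fun e => (ρ e.1, e.2.1, ρ e.2.2)) := by
        ext e
        simp only [Finset.mem_filter, hE, Finset.mem_union, Finset.mem_erase, Finset.mem_image]
        constructor
        · rintro ⟨h1 | ⟨f, hf, rfl⟩, h2⟩
          · exfalso
            have := (hWF _ h1.2).2.1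
            rw [h2] at this; exact hρx this
          · refine ⟨f, ⟨hf, ?_⟩, rfl⟩
            simp only at h2
            exact hinj (hWF_F f hf).2.1 hx h2
        · rintro ⟨f, ⟨hf, hf2⟩, rfl⟩
          exact ⟨Or.inr ⟨f, hf, rfl⟩, by simp only; rw [hf2]⟩
      rw [hset, Finset.card_image_of_injOn]
      intro f hf g hg hfg
      exact hinjE f (Finset.mem_filter.mp hf).1 g (Finset.mem_filter.mp hg).1 hfg
    · unfold outDeg
      have hset : H'.E.filter (fun e => e.1 = ρ x) =
          (R.F.E.filter (fun e => e.1 = x)).image (fun e => (ρ e.1, e.2.1, ρ e.2.2)) := by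
        ext e
        simp only [Finset.mem_filter, hE, Finset.mem_union, Finset.mem_erase, Finset.mem_image]
        constructor
        · rintro ⟨h1 | ⟨f, hf, rfl⟩, h2⟩
          · exfalso
            have := (hWF _ h1.2).1
            rw [h2] at this; exact hρx this
          · refine ⟨f, ⟨hf, ?_⟩, rfl⟩
            simp only at h2
            exact hinj (hWF_F f hf).1 hx h2
        · rintro ⟨f, ⟨hf, hf2⟩, rfl⟩
          exact ⟨Or.inr ⟨f, hf, rfl⟩, by simp only; rw [hf2]⟩
      rw [hset, Finset.card_image_of_injOn]
      intro f hf g hg hfg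
      exact hinjE f (Finset.mem_filter.mp hf).1 g (Finset.mem_filter.mp hg).1 hfg
  -- EncodedSG H'
  have hWF' : WellFormed H' := by
    intro e heE
    rw [hE] at heE
    rcases Finset.mem_union.mp heE with h1 | h2
    · have h1' := Finset.mem_of_mem_erase h1
      obtain ⟨a1, a2, a3⟩ := hWF e h1'
      exact ⟨by rw [hV]; exact Finset.mem_union_left _ a1,
             by rw [hV]; exact Finset.mem_union_left _ a2, a3⟩
    · obtain ⟨f, hf, rfl⟩ := Finset.mem_image.mp h2
      obtain ⟨a1, a2, a3⟩ := hWF_F f hf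
      refine ⟨?_, ?_, ?_⟩
      · rw [hV]; exact Finset.mem_union_right _ (Finset.mem_image_of_mem ρ a1)
      · rw [hV]; exact Finset.mem_union_right _ (Finset.mem_image_of_mem ρ a2)
      · intro hc; exact a3 (hinj a1 a2 hc)
  have hlab' : ∀ v ∈ H'.V, (H'.lab v).isNode = true ∨ (H'.lab v).isWire = true := by
    intro v hv
    rw [hV] at hv
    rcases Finset.mem_union.mp hv with h | h
    · rw [hlab v h]; exact hlabH v h
    · obtain ⟨x, hx, rfl⟩ := Finset.mem_image.mp h
      rw [hlabρ x hx]; exact hFlab x hx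
  have hwire' : ∀ v ∈ H'.V, (H'.lab v).isWire = true → inDeg H' v ≤ 1 ∧ outDeg H' v ≤ 1 := by
    intro v hv hvw
    by_cases hvH : v ∈ H.V
    · have hvw' : (H.lab v).isWire = true := by rw [← hlab v hvH]; exact hvw
      obtain ⟨d1, d2⟩ := hdegold v hvH hvw'
      rw [d1, d2]
      exact hwireH v hvH hvw'
    · rw [hV] at hv
      rcases Finset.mem_union.mp hv with h | h
      · exact absurd h hvH
      obtain ⟨x, hx, rfl⟩ := Finset.mem_image.mp h
      obtain ⟨hxs, hxt⟩ := hnotst x hvH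
      have hxw : (R.F.lab x).isWire = true := by rw [← hlabρ x hx]; exact hvw
      obtain ⟨d1, d2⟩ := hdegfresh x hx hxs hxt
      obtain ⟨w1, w2⟩ := hwires x hx hxw
      rw [d1, d2, w1, w2]
      exact ⟨le_refl 1, le_refl 1⟩
  have hif' : ∀ e ∈ H'.E, if e.2.1.isEnc = true
      then (H'.lab e.1).isNode = true ∧ (H'.lab e.2.2).isNode = true
      else ¬((H'.lab e.1).isNode = true ∧ (H'.lab e.2.2).isNode = true) := by
    intro e heE
    rw [hE] at heE
    rcases Finset.mem_union.mp heE with h1 | h2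
    · have h1' := Finset.mem_of_mem_erase h1
      obtain ⟨a1, a2, _⟩ := hWF e h1'
      rw [hlab e.1 a1, hlab e.2.2 a2]
      exact hifH e h1'
    · obtain ⟨f, hf, rfl⟩ := Finset.mem_image.mp h2
      obtain ⟨a1, a2, _⟩ := hWF_F f hf
      simp only
      rw [if_neg (by rw [hFenc f hf]; simp)]
      rw [hlabρ f.1 a1, hlabρ f.2.2 a2]
      exact hFnn f hf
  refine ⟨⟨hWF', hlab', hwire', hif'⟩, ?_, ?_⟩
  · ext v
    simp only [inputs, Finset.mem_filter]
    constructor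
    · rintro ⟨hv, hvw, hdeg⟩
      by_cases hvH : v ∈ H.V
      · have hvw' : (H.lab v).isWire = true := by rw [← hlab v hvH]; exact hvw
        exact ⟨hvH, hvw', by rw [← (hdegold v hvH hvw').1]; exact hdeg⟩
      · exfalso
        rw [hV] at hv
        rcases Finset.mem_union.mp hv with h | h
        · exact hvH h
        obtain ⟨x, hx, rfl⟩ := Finset.mem_image.mp h
        obtain ⟨hxs, hxt⟩ := hnotst x hvH
        have hxw : (R.F.lab x).isWire = true := by rw [← hlabρ x hx]; exact hvw
        have := (hdegfresh x hx hxs hxt).1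
        rw [this, (hwires x hx hxw).1] at hdeg
        exact one_ne_zero hdeg
    · rintro ⟨hv, hvw, hdeg⟩
      refine ⟨by rw [hV]; exact Finset.mem_union_left _ hv,
              by rw [hlab v hv]; exact hvw, ?_⟩
      rw [(hdegold v hv hvw).1]; exact hdeg
  · ext v
    simp only [outputs, Finset.mem_filter]
    constructor
    · rintro ⟨hv, hvw, hdeg⟩
      by_cases hvH : v ∈ H.V
      · have hvw' : (H.lab v).isWire = true := by rw [← hlab v hvH]; exact hvw
        exact ⟨hvH, hvw', by rw [← (hdegold v hvH hvw').2]; exact hdeg⟩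
      · exfalso
        rw [hV] at hv
        rcases Finset.mem_union.mp hv with h | h
        · exact hvH h
        obtain ⟨x, hx, rfl⟩ := Finset.mem_image.mp h
        obtain ⟨hxs, hxt⟩ := hnotst x hvH
        have hxw : (R.F.lab x).isWire = true := by rw [← hlabρ x hx]; exact hvw
        have := (hdegfresh x hx hxs hxt).2
        rw [this, (hwires x hx hxw).2] at hdeg
        exact one_ne_zero hdeg
    · rintro ⟨hv, hvw, hdeg⟩
      refine ⟨by rw [hV]; exact Finset.mem_union_left _ hv,
              by rw [hlab v hv]; exact hvw, ?_⟩
      rw [(hdegold v hv hvw).2]; exact hdeg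

/-- Full decoding of an encoded string graph yields a string graph
with exactly the same inputs and outputs. -/
theorem decoding_preserves_inputs_outputs (T : DecSystem) (hT : ValidDecSystem T)
    (H H' : LabGraph) (hH : EncodedSG H) (hd : FullDecode T H H') :
    StringGraph H' ∧ inputs H' = inputs H ∧ outputs H' = outputs H := by
  obtain ⟨hrtg, h0⟩ := hd
  have key : ∀ K, Relation.ReflTransGen (DecStep T) K H' → EncodedSG K →
      EncodedSG H' ∧ inputs H' = inputs K ∧ outputs H' = outputs K := by
    intro K hK
    induction hK using Relation.ReflTransGen.head_induction_on with
    | refl => intro h; exact ⟨h, rfl, rfl⟩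
    | head hstep _ ih =>
      intro h
      obtain ⟨hE2, hi, ho⟩ := step_preserves T hT h hstep
      obtain ⟨hE3, hi2, ho2⟩ := ih hE2
      exact ⟨hE3, hi2.trans hi, ho2.trans ho⟩
  obtain ⟨hE1, hi, ho⟩ := key H hrtg hH
  exact ⟨enc_done hE1 h0, hi, ho⟩
end
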